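/- Let n ≥ 2, β > 0, γ ∈ ℝ and α ∈ ℝ, and define on the open chamber {λ ∈ ℝⁿ : 0 < λ₁ < … < λₙ} the function F(λ₁,…,λₙ) = ∏_{i=1}^n λ_i^{(α−(n−1)β)/2 − 1} e^{−γ λ_i} · ∏_{1≤i<j≤n} (λ_j − λ_i)^β and the drift coefficients b_i(λ) = α − 2γλ_i + β ∑_{j≠i} (λ_i + λ_j)/(λ_i − λ_j). Then F is differentiable on the open chamber and for every point λ of the open chamber and every i ∈ {1,…,n}: (b_i(λ) − 2)·F(λ) − 2 λ_i · ∂F/∂λ_i(λ) = 0. -/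

import Mathlib

open Finset

theorem auxProdDiff {ι E : Type*} [NormedAddCommGroup E] [NormedSpace ℝ E]
    (s : Finset ι) (f : ι → E → ℝ) (x : E)
    (h : ∀ i ∈ s, DifferentiableAt ℝ (f i) x) :
    DifferentiableAt ℝ (fun y => ∏ i ∈ s, f i y) x := by
  classical
  induction s using Finset.cons_induction with
  | empty => simp
  | cons a s ha ih =>
    simp only [Finset.prod_cons]
    exact (h a (Finset.mem_cons_self a s)).mul
      (ih fun i hi => h i (Finset.mem_cons_of_mem hi))

theorem auxPairSum {n : ℕ} (i : Fin n) (v : Fin n → ℝ) :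
    ∑ p ∈ univ.filter (fun p : Fin n × Fin n => p.1 < p.2),
      (if p.1 = i then v p.2 else if p.2 = i then v p.1 else 0)
      = ∑ j ∈ univ.erase i, v j := by
  classical
  rw [Finset.sum_filter, Fintype.sum_prod_type]
  have hterm : ∀ a b : Fin n,
      (if a < b then (if a = i then v b else if b = i then v a else 0) else 0)
        = (if a = i then (if i < b then v b else 0) else 0)
          + (if b = i then (if a < i then v a else 0) else 0) := by
    intro a b
    rcases lt_trichotomy a b with h | h | h
    · by_cases h2 : a = i <;> by_cases h3 : b = i <;> simp_all [h.ne, h.ne']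
    · subst h
      by_cases h2 : a = i <;> simp [h2, lt_irrefl]
    · by_cases h2 : a = i <;> by_cases h3 : b = i <;>
        simp_all [h.ne, h.ne', not_lt_of_gt h, asymm h]
  simp only [hterm, Finset.sum_add_distrib]
  rw [Finset.sum_comm
    (f := fun a b => if a = i then (if i < b then v b else 0) else 0)]
  simp only [Finset.sum_ite_eq', Finset.mem_univ, if_true]
  have hj : ∀ j : Fin n, ((if i < j then v j else 0) + (if j < i then v j else 0))
      = if j = i then 0 else v j := by
    intro j
    rcases lt_trichotomy i j with h | h | h
    · simp [h, asymm h, h.ne']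
    · simp [h, lt_irrefl]
    · simp [h, asymm h, h.ne]
  rw [← Finset.sum_add_distrib]
  simp only [hj]
  rw [← Finset.sum_erase_add _ _ (Finset.mem_univ i), if_pos rfl, add_zero]
  exact Finset.sum_congr rfl (fun j hj => if_neg (Finset.mem_erase.mp hj).1)

/-- The core computation in the proof of Proposition 2.6 of the paper: the
(unnormalized) stationary density `F` satisfies, on the open chamber,
`(b_i(λ) − 2)·F(λ) − 2 λ_i ∂F/∂λ_i(λ) = 0` for each coordinate `i`, where
`b_i` is the drift of the eigenvalue SDE. -/
theorem stmt_9 (n : ℕ) (hn : 2 ≤ n) (α β γ : ℝ) (hβ : 0 < β)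
    (D : Set (Fin n → ℝ)) (hD : D = {l | 0 < l ⟨0, by omega⟩ ∧ StrictMono l})
    (F : (Fin n → ℝ) → ℝ)
    (hF : ∀ l : Fin n → ℝ, F l =
      (∏ i : Fin n,
          (l i) ^ ((α - ((n : ℝ) - 1) * β) / 2 - 1) * Real.exp (-γ * l i)) *
        ∏ p ∈ Finset.univ.filter (fun p : Fin n × Fin n => p.1 < p.2),
          (l p.2 - l p.1) ^ β)
    (b : Fin n → (Fin n → ℝ) → ℝ)
    (hb : ∀ (i : Fin n) (l : Fin n → ℝ), b i l =
      α - 2 * γ * l i + β * ∑ j ∈ Finset.univ.erase i, (l i + l j) / (l i - l j)) :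
    DifferentiableOn ℝ F D ∧
      ∀ l ∈ D, ∀ i : Fin n, ∃ d : ℝ,
        HasDerivAt (fun y => F (Function.update l i y)) d (l i) ∧
          (b i l - 2) * F l - 2 * l i * d = 0 := by
  classical
  set S : Finset (Fin n × Fin n) :=
    Finset.univ.filter (fun p : Fin n × Fin n => p.1 < p.2) with hS
  obtain ⟨c, hc⟩ : ∃ c : ℝ, c = (α - ((n : ℝ) - 1) * β) / 2 - 1 := ⟨_, rfl⟩
  have hFe : F = fun l : Fin n → ℝ =>
      (∏ k : Fin n, (l k) ^ c * Real.exp (-γ * l k)) *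
        ∏ p ∈ S, (l p.2 - l p.1) ^ β := by
    funext l
    rw [hF l, hc]
  -- positivity of coordinates on D
  have hpos : ∀ l ∈ D, ∀ k : Fin n, 0 < l k := by
    intro l hl k
    rw [hD] at hl
    exact hl.1.trans_le (hl.2.monotone (by simp [Fin.le_def]))
  constructor
  · -- differentiability
    intro l hl
    have hm : StrictMono l := by rw [hD] at hl; exact hl.2
    apply DifferentiableAt.differentiableWithinAt
    rw [hFe]
    have hproj : ∀ k : Fin n, DifferentiableAt ℝ (fun v : Fin n → ℝ => v k) l :=
      fun k => (ContinuousLinearMap.proj (R := ℝ) (φ := fun _ : Fin n => ℝ) k).differentiableAt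
    apply DifferentiableAt.mul
    · apply auxProdDiff
      intro k _
      exact ((hproj k).rpow_const (Or.inl (hpos l hl k).ne')).mul
        (((hproj k).const_mul (-γ)).exp)
    · apply auxProdDiff
      intro p hp
      have hlt : p.1 < p.2 := by
        rw [hS] at hp; exact (Finset.mem_filter.mp hp).2
      exact ((hproj p.2).sub (hproj p.1)).rpow_const
        (Or.inl (sub_pos.mpr (hm hlt)).ne')
  · -- the derivative identity
    intro l hl i
    have hm : StrictMono l := by rw [hD] at hl; exact hl.2
    have hxpos : 0 < l i := hpos l hl i
    have hupd : Function.update l i (l i) = l := Function.update_eq_self i l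
    -- factor functions
    set f : Fin n → ℝ → ℝ :=
      fun k y => (Function.update l i y k) ^ c *
        Real.exp (-γ * Function.update l i y k) with hf'
    set h : Fin n × Fin n → ℝ → ℝ :=
      fun p y => (Function.update l i y p.2 - Function.update l i y p.1) ^ β with hh'
    have hfx : ∀ k, f k (l i) = (l k) ^ c * Real.exp (-γ * l k) := by
      intro k; simp [hf', hupd]
    have hhx : ∀ p : Fin n × Fin n, h p (l i) = (l p.2 - l p.1) ^ β := by
      intro p; simp [hh', hupd]
    set P : ℝ := ∏ k : Fin n, (l k) ^ c * Real.exp (-γ * l k) with hP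
    set Q : ℝ := ∏ p ∈ S, (l p.2 - l p.1) ^ β with hQ
    have hFl : F l = P * Q := by rw [hFe]
    -- derivatives of the f-factors
    set f' : Fin n → ℝ := fun k =>
      if k = i then ((l i) ^ c * Real.exp (-γ * l i)) * (c / l i - γ) else 0 with hf''
    have hfd : ∀ k ∈ Finset.univ, HasDerivAt (f k) (f' k) (l i) := by
      intro k _
      by_cases hk : k = i
      · subst hk
        have hfeq : f k = fun y => y ^ c * Real.exp (-γ * y) := by
          funext y; simp [hf']
        rw [hfeq]
        simp only [hf'', if_true]
        have h1 : HasDerivAt (fun y : ℝ => y ^ c) (c * (l k) ^ (c - 1)) (l k) :=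
          Real.hasDerivAt_rpow_const (Or.inl hxpos.ne')
        have h2 : HasDerivAt (fun y : ℝ => Real.exp (-γ * y))
            (Real.exp (-γ * l k) * (-γ * 1)) (l k) :=
          ((hasDerivAt_id (l k)).const_mul (-γ)).exp
        have := h1.mul h2
        refine this.congr_deriv ?_
        rw [Real.rpow_sub_one hxpos.ne']
        ring
      · have hfeq : f k = fun _ => (l k) ^ c * Real.exp (-γ * l k) := by
          funext y; simp [hf', Function.update_of_ne hk]
        rw [hfeq]
        simp only [hf'']
        rw [if_neg hk]
        exact hasDerivAt_const _ _
    -- derivatives of the h-factors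
    set w : Fin n × Fin n → ℝ := fun p =>
      if p.1 = i then β / (l i - l p.2)
      else if p.2 = i then β / (l i - l p.1) else 0 with hw
    have key1 : ∀ A B : ℝ, 0 < A - B →
        (0 - 1) * β * (A - B) ^ (β - 1) = (A - B) ^ β * (β / (B - A)) := by
      intro A B hAB
      have h2 : B - A ≠ 0 := by intro hh; apply hAB.ne'; linarith
      rw [Real.rpow_sub_one hAB.ne']
      field_simp
      ring
    have key2 : ∀ A B : ℝ, 0 < A - B →
        (1 - 0) * β * (A - B) ^ (β - 1) = (A - B) ^ β * (β / (A - B)) := by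
      intro A B hAB
      rw [Real.rpow_sub_one hAB.ne']
      field_simp
      ring
    have hhd : ∀ p ∈ S, HasDerivAt (h p) ((l p.2 - l p.1) ^ β * w p) (l i) := by
      intro p hp
      obtain ⟨a1, a2⟩ := p
      have hlt : a1 < a2 := by
        rw [hS] at hp; exact (Finset.mem_filter.mp hp).2
      by_cases h1 : a1 = i
      · subst h1
        have h2 : a2 ≠ a1 := hlt.ne'
        have hheq : h (a1, a2) = fun y => (l a2 - y) ^ β := by
          funext y
          simp [hh', Function.update_of_ne h2]
        have hbpos : 0 < l a2 - l a1 := sub_pos.mpr (hm hlt)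
        have hwv : w (a1, a2) = β / (l a1 - l a2) := by simp [hw]
        rw [hheq]
        show HasDerivAt _ ((l a2 - l a1) ^ β * w (a1, a2)) (l a1)
        rw [hwv]
        have hd : HasDerivAt (fun y : ℝ => l a2 - y) (0 - 1) (l a1) :=
          (hasDerivAt_const (l a1) (l a2)).sub (hasDerivAt_id (l a1))
        have hder := hd.rpow_const (p := β) (Or.inl (by simpa using hbpos.ne'))
        rw [← key1 (l a2) (l a1) hbpos]
        exact hder
      · by_cases h2 : a2 = i
        · subst h2
          have h1' : a1 ≠ a2 := fun hh => h1 hh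
          have hheq : h (a1, a2) = fun y => (y - l a1) ^ β := by
            funext y
            simp [hh', Function.update_of_ne h1']
          have hbpos : 0 < l a2 - l a1 := sub_pos.mpr (hm hlt)
          have hwv : w (a1, a2) = β / (l a2 - l a1) := by simp [hw, h1]
          rw [hheq]
          show HasDerivAt _ ((l a2 - l a1) ^ β * w (a1, a2)) (l a2)
          rw [hwv]
          have hd : HasDerivAt (fun y : ℝ => y - l a1) (1 - 0) (l a2) :=
            (hasDerivAt_id (l a2)).sub (hasDerivAt_const (l a2) (l a1))
          have hder := hd.rpow_const (p := β) (Or.inl (by simpa using hbpos.ne'))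
          rw [← key2 (l a2) (l a1) hbpos]
          exact hder
        · have hheq : h (a1, a2) = fun _ => (l a2 - l a1) ^ β := by
            funext y
            simp [hh', Function.update_of_ne h1, Function.update_of_ne h2]
          have hwv : w (a1, a2) = 0 := by simp [hw, h1, h2]
          rw [hheq]
          show HasDerivAt _ ((l a2 - l a1) ^ β * w (a1, a2)) (l i)
          rw [hwv, mul_zero]
          exact hasDerivAt_const _ _
    -- assemble the product derivatives
    have hPd := HasDerivAt.finset_prod hfd
    have hQd := HasDerivAt.finset_prod hhd
    -- simplify the P-derivative
    have hPdval : (∑ k : Fin n, (∏ m ∈ Finset.univ.erase k, f m (l i)) • f' k)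
        = P * (c / l i - γ) := by
      rw [Finset.sum_eq_single i]
      · simp only [hf'', if_true]
        rw [smul_eq_mul, ← mul_assoc]
        congr 1
        have := Finset.prod_erase_mul Finset.univ (fun m => f m (l i))
          (Finset.mem_univ i)
        rw [← hfx i] at *
        rw [this]
        exact Finset.prod_congr rfl fun k _ => hfx k
      · intro k _ hk
        simp only [hf'', if_neg hk, smul_zero]
      · intro hi; exact absurd (Finset.mem_univ i) hi
    -- simplify the Q-derivative
    have hQdval : (∑ p ∈ S, (∏ q ∈ S.erase p, h q (l i)) • ((l p.2 - l p.1) ^ β * w p))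
        = Q * (β * ∑ j ∈ Finset.univ.erase i, (l i - l j)⁻¹) := by
      have hterm : ∀ p ∈ S, (∏ q ∈ S.erase p, h q (l i)) • ((l p.2 - l p.1) ^ β * w p)
          = Q * w p := by
        intro p hp
        rw [smul_eq_mul, ← mul_assoc, ← hhx p]
        congr 1
        rw [Finset.prod_erase_mul S (fun q => h q (l i)) hp, hQ]
        exact Finset.prod_congr rfl fun q _ => hhx q
      rw [Finset.sum_congr rfl hterm, ← Finset.mul_sum]
      congr 1
      have := auxPairSum i (fun j => β / (l i - l j))
      rw [hS]
      rw [show (∑ p ∈ Finset.univ.filter (fun p : Fin n × Fin n => p.1 < p.2), w p)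
        = ∑ p ∈ Finset.univ.filter (fun p : Fin n × Fin n => p.1 < p.2),
          (if p.1 = i then (fun j => β / (l i - l j)) p.2
            else if p.2 = i then (fun j => β / (l i - l j)) p.1 else 0) from
        Finset.sum_congr rfl fun p _ => by rw [hw]]
      rw [this, Finset.mul_sum]
      exact Finset.sum_congr rfl fun j _ => by rw [div_eq_mul_inv]
    rw [hPdval] at hPd
    rw [hQdval] at hQd
    -- total derivative
    have hgd : HasDerivAt (fun y => F (Function.update l i y))
        (P * (c / l i - γ) * Q +
          P * (Q * (β * ∑ j ∈ Finset.univ.erase i, (l i - l j)⁻¹))) (l i) := by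
      have := hPd.mul hQd
      have e : (∏ k, f k) * ∏ p ∈ S, h p = fun y => F (Function.update l i y) := by
        funext y
        simp only [Pi.mul_apply, Finset.prod_apply, hFe, hf', hh']
      rw [e] at this
      exact this.congr_deriv (by simp only [Finset.prod_apply, hfx, hhx, hP, hQ])
    refine ⟨_, hgd, ?_⟩
    -- the algebraic identity
    have hcard : ((Finset.univ.erase i).card : ℝ) = (n : ℝ) - 1 := by
      rw [Finset.card_erase_of_mem (Finset.mem_univ i), Finset.card_univ,
        Fintype.card_fin]
      have : (1:ℕ) ≤ n := by omega
      push_cast [this]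
      ring
    have hne : ∀ j ∈ Finset.univ.erase i, l i - l j ≠ 0 := by
      intro j hj
      exact sub_ne_zero.mpr (fun hlj => (Finset.mem_erase.mp hj).1
        (hm.injective hlj.symm))
    have hsum : (∑ j ∈ Finset.univ.erase i, (l i + l j) / (l i - l j))
        - 2 * l i * (∑ j ∈ Finset.univ.erase i, (l i - l j)⁻¹) = -((n : ℝ) - 1) := by
      rw [Finset.mul_sum, ← Finset.sum_sub_distrib]
      rw [Finset.sum_congr rfl (fun j hj => show
          (l i + l j) / (l i - l j) - 2 * l i * (l i - l j)⁻¹ = -1 by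
        have := hne j hj
        field_simp
        ring)]
      rw [Finset.sum_const, nsmul_eq_mul, hcard]
      ring
    rw [hb, hFl]
    have hPQ : P * (c / l i - γ) * Q +
        P * (Q * (β * ∑ j ∈ Finset.univ.erase i, (l i - l j)⁻¹))
      = P * Q * ((c / l i - γ) + β * ∑ j ∈ Finset.univ.erase i, (l i - l j)⁻¹) := by
      ring
    rw [hPQ]
    have hkey : (α - 2 * γ * l i +
        β * ∑ j ∈ Finset.univ.erase i, (l i + l j) / (l i - l j) - 2)
        - 2 * l i * ((c / l i - γ) + β * ∑ j ∈ Finset.univ.erase i, (l i - l j)⁻¹)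
        = 0 := by
      have h2c : 2 * l i * (c / l i) = 2 * c := by
        field_simp
      have hexp : 2 * l i * ((c / l i - γ) +
          β * ∑ j ∈ Finset.univ.erase i, (l i - l j)⁻¹)
          = 2 * c - 2 * l i * γ +
            β * (2 * l i * ∑ j ∈ Finset.univ.erase i, (l i - l j)⁻¹) := by
        rw [mul_add, mul_sub, h2c]; ring
      rw [hexp, hc]
      have := hsum
      nlinarith [hsum]
    linear_combination (P * Q) * hkey
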